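/- Let n ≥ 1 be an integer, let 0 < s ≤ 1/2, and set α = (n+1+s)/2 and β = (n+1−s)/2. There exist constants C > 0 and M > 0, depending only on n and s, such that for every integer k ≥ 0 and every x > 0 with (2k+n)x ≥ M, e^{−x} ∫₀^∞ e^{−2xt} t^{k+α−1} (1+t)^{−(k+β)} dt ≤ C x^{−s} e^{−√((2k+n+1−s) x)}. -/

import Mathlib

open MeasureTheory

lemma stmt13_pointwise (m s x t : ℝ) (hm : 0 < m) (hs0 : 0 < s) (hx : 0 < x)
    (ht : 0 < t) :
    Real.exp (-x) * (Real.exp (-(2 * x * t)) * t ^ (m + (s - 1)) * (1 + t) ^ (-m))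
      ≤ Real.exp (-Real.sqrt (2 * m * x)) * (t ^ (s - 1) * Real.exp (-(x * t))) := by
  have ht1 : (0:ℝ) < 1 + t := by linarith
  -- factor the powers
  have h1 : t ^ (m + (s - 1)) = t ^ m * t ^ (s - 1) := Real.rpow_add ht _ _
  have h2 : (1 + t) ^ (-m) = ((1 + t) ^ m)⁻¹ := Real.rpow_neg ht1.le _
  -- (t/(1+t))^m ≤ exp(-m/(1+t))
  have hbase : t / (1 + t) ≤ Real.exp (-(1 / (1 + t))) := by
    have := Real.add_one_le_exp (-(1 / (1 + t)))
    have : 1 - 1 / (1 + t) ≤ Real.exp (-(1 / (1 + t))) := by linarith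
    calc t / (1 + t) = 1 - 1 / (1 + t) := by field_simp; ring
      _ ≤ _ := this
  have hdiv : (t / (1 + t)) ^ m ≤ Real.exp (-(1 / (1 + t))) ^ m :=
    Real.rpow_le_rpow (by positivity) hbase hm.le
  have hexp : Real.exp (-(1 / (1 + t))) ^ m = Real.exp (-(m / (1 + t))) := by
    rw [← Real.exp_mul]; ring_nf
  -- AM-GM: sqrt(2 m x) ≤ x(1+t) + m/(1+t)
  have hsq : Real.sqrt (2 * m * x) ≤ x * (1 + t) + m / (1 + t) := by
    have ha : (0:ℝ) ≤ x * (1 + t) := by positivity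
    have hb : (0:ℝ) ≤ m / (1 + t) := by positivity
    have hab : x * (1 + t) * (m / (1 + t)) = m * x := by field_simp
    have e3 : Real.sqrt (x * (1 + t)) * Real.sqrt (m / (1 + t)) = Real.sqrt (m * x) := by
      rw [← Real.sqrt_mul ha, hab]
    have e1 := Real.sq_sqrt ha
    have e2 := Real.sq_sqrt hb
    have h4 := sq_nonneg (Real.sqrt (x * (1 + t)) - Real.sqrt (m / (1 + t)))
    have h5 : Real.sqrt (2 * m * x) ≤ 2 * Real.sqrt (m * x) := by
      have h6 : Real.sqrt (2 * m * x) ≤ Real.sqrt (2 ^ 2 * (m * x)) :=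
        Real.sqrt_le_sqrt (by nlinarith [hm.le, hx.le])
      have h7 : Real.sqrt (2 ^ 2 * (m * x)) = 2 * Real.sqrt (m * x) := by
        rw [Real.sqrt_mul (by positivity : (0:ℝ) ≤ 2 ^ 2),
          Real.sqrt_sq (by norm_num : (0:ℝ) ≤ 2)]
      linarith
    nlinarith
  -- combine
  have key : Real.exp (-x) * Real.exp (-(2 * x * t)) * Real.exp (-(m / (1 + t)))
      ≤ Real.exp (-Real.sqrt (2 * m * x)) * Real.exp (-(x * t)) := by
    rw [← Real.exp_add, ← Real.exp_add, ← Real.exp_add]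
    apply Real.exp_le_exp.2
    nlinarith
  have hts : (0:ℝ) ≤ t ^ (s - 1) := Real.rpow_nonneg ht.le _
  have hfinal : (t / (1 + t)) ^ m = t ^ m * ((1 + t) ^ m)⁻¹ := by
    rw [Real.div_rpow ht.le ht1.le, div_eq_mul_inv]
  calc Real.exp (-x) * (Real.exp (-(2 * x * t)) * t ^ (m + (s - 1)) * (1 + t) ^ (-m))
      = (Real.exp (-x) * Real.exp (-(2 * x * t)) * (t / (1 + t)) ^ m) * t ^ (s - 1) := by
        rw [h1, h2, hfinal]; ring
    _ ≤ (Real.exp (-x) * Real.exp (-(2 * x * t)) * Real.exp (-(m / (1 + t)))) * t ^ (s - 1) := by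
        apply mul_le_mul_of_nonneg_right _ hts
        apply mul_le_mul_of_nonneg_left _ (by positivity)
        rw [← hexp]; exact hdiv
    _ ≤ (Real.exp (-Real.sqrt (2 * m * x)) * Real.exp (-(x * t))) * t ^ (s - 1) :=
        mul_le_mul_of_nonneg_right key hts
    _ = _ := by ring

/-- the bound
`e^{−x} ∫₀^∞ e^{−2xt} t^{k+α−1}(1+t)^{−(k+β)} dt ≤ C x^{−s} e^{−√((2k+n+1−s)x)}`
with `α = (n+1+s)/2`, `β = (n+1−s)/2`, for `(2k+n)x` large. -/
theorem stmt_13 (n : ℕ) (hn : 1 ≤ n) (s : ℝ) (hs0 : 0 < s) (hs : s ≤ 1 / 2) :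
    ∃ C > (0 : ℝ), ∃ M > (0 : ℝ), ∀ (k : ℕ) (x : ℝ), 0 < x →
      M ≤ (2 * (k : ℝ) + n) * x →
      ENNReal.ofReal (Real.exp (-x)) *
          ∫⁻ t in Set.Ioi (0 : ℝ),
            ENNReal.ofReal
              (Real.exp (-(2 * x * t)) * t ^ ((k : ℝ) + ((n : ℝ) + 1 + s) / 2 - 1) *
                (1 + t) ^ (-((k : ℝ) + ((n : ℝ) + 1 - s) / 2)))
        ≤ ENNReal.ofReal
            (C * x ^ (-s) * Real.exp (-Real.sqrt ((2 * (k : ℝ) + (n : ℝ) + 1 - s) * x))) := by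
  refine ⟨Real.Gamma s, Real.Gamma_pos_of_pos hs0, 1, one_pos, fun k x hx _ => ?_⟩
  have hn1 : (1:ℝ) ≤ (n:ℝ) := by exact_mod_cast hn
  set m : ℝ := (k : ℝ) + ((n : ℝ) + 1 - s) / 2 with hmdef
  have hm : 0 < m := by
    have : (0:ℝ) ≤ (k:ℝ) := Nat.cast_nonneg k
    rw [hmdef]; nlinarith
  have hexpo : (k : ℝ) + ((n : ℝ) + 1 + s) / 2 - 1 = m + (s - 1) := by
    rw [hmdef]; ring
  have hlam : (2 * (k : ℝ) + (n : ℝ) + 1 - s) * x = 2 * m * x := by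
    rw [hmdef]; ring
  -- the comparison integrand
  have hint : IntegrableOn (fun t : ℝ => t ^ (s - 1) * Real.exp (-(x * t))) (Set.Ioi 0) := by
    have h := integrableOn_rpow_mul_exp_neg_mul_rpow (s := s - 1) (p := 1) (b := x)
      (by linarith) one_pos hx
    refine h.congr_fun (fun t ht => ?_) measurableSet_Ioi
    dsimp only; rw [Real.rpow_one, neg_mul]
  have hnn : 0 ≤ᵐ[volume.restrict (Set.Ioi (0:ℝ))]
      (fun t : ℝ => t ^ (s - 1) * Real.exp (-(x * t))) :=
    (ae_restrict_iff' measurableSet_Ioi).2 (MeasureTheory.ae_of_all _ fun t ht =>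
      mul_nonneg (Real.rpow_nonneg (le_of_lt ht) _) (Real.exp_pos _).le)
  have hmeas : Measurable (fun t : ℝ =>
      ENNReal.ofReal (Real.exp (-Real.sqrt (2 * m * x)) * (t ^ (s - 1) * Real.exp (-(x * t))))) := by
    fun_prop
  calc ENNReal.ofReal (Real.exp (-x)) *
          ∫⁻ t in Set.Ioi (0 : ℝ),
            ENNReal.ofReal
              (Real.exp (-(2 * x * t)) * t ^ ((k : ℝ) + ((n : ℝ) + 1 + s) / 2 - 1) *
                (1 + t) ^ (-((k : ℝ) + ((n : ℝ) + 1 - s) / 2)))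
      = ∫⁻ t in Set.Ioi (0 : ℝ),
            ENNReal.ofReal (Real.exp (-x) *
              (Real.exp (-(2 * x * t)) * t ^ (m + (s - 1)) * (1 + t) ^ (-m))) := by
        rw [← lintegral_const_mul' _ _ ENNReal.ofReal_ne_top]
        refine lintegral_congr fun t => ?_
        rw [← ENNReal.ofReal_mul (Real.exp_pos _).le, hexpo]
    _ ≤ ∫⁻ t in Set.Ioi (0 : ℝ),
            ENNReal.ofReal (Real.exp (-Real.sqrt (2 * m * x)) *
              (t ^ (s - 1) * Real.exp (-(x * t)))) := by
        refine setLIntegral_mono hmeas fun t ht => ?_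
        exact ENNReal.ofReal_le_ofReal (stmt13_pointwise m s x t hm hs0 hx ht)
    _ = ENNReal.ofReal (Real.exp (-Real.sqrt (2 * m * x))) *
          ∫⁻ t in Set.Ioi (0 : ℝ),
            ENNReal.ofReal (t ^ (s - 1) * Real.exp (-(x * t))) := by
        rw [← lintegral_const_mul' _ _ ENNReal.ofReal_ne_top]
        refine lintegral_congr fun t => ?_
        rw [← ENNReal.ofReal_mul (Real.exp_pos _).le]
    _ = ENNReal.ofReal (Real.exp (-Real.sqrt (2 * m * x))) *
          ENNReal.ofReal ((1 / x) ^ s * Real.Gamma s) := by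
        rw [← MeasureTheory.ofReal_integral_eq_lintegral_ofReal hint hnn,
          Real.integral_rpow_mul_exp_neg_mul_Ioi hs0 hx]
    _ ≤ ENNReal.ofReal
            (Real.Gamma s * x ^ (-s) *
              Real.exp (-Real.sqrt ((2 * (k : ℝ) + (n : ℝ) + 1 - s) * x))) := by
        rw [← ENNReal.ofReal_mul (Real.exp_pos _).le, hlam]
        apply ENNReal.ofReal_le_ofReal
        rw [one_div, Real.inv_rpow hx.le, ← Real.rpow_neg hx.le]
        exact le_of_eq (by ring)
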